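/- Minimal hitting set duality (direction 1): a set X ⊆ F is a distance-restricted AXp (a subset-minimal weak AXp) if and only if X is a minimal hitting set of the collection of all distance-restricted CXp's. -/

import Mathlib

/-- Distance-restricted weak abductive explanation. -/
def WAXp {m : ℕ} {D : Fin m → Type*} {K : Type*}
    (κ : (∀ i, D i) → K) (v : ∀ i, D i) (c : K)
    (dist : (∀ i, D i) → (∀ i, D i) → ℝ) (ε : ℝ) (X : Set (Fin m)) : Prop :=
  ∀ x : ∀ i, D i, (∀ i ∈ X, x i = v i) → dist x v ≤ ε → κ x = c

/-- Distance-restricted weak contrastive explanation. -/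
def WCXp {m : ℕ} {D : Fin m → Type*} {K : Type*}
    (κ : (∀ i, D i) → K) (v : ∀ i, D i) (c : K)
    (dist : (∀ i, D i) → (∀ i, D i) → ℝ) (ε : ℝ) (Y : Set (Fin m)) : Prop :=
  ∃ x : ∀ i, D i, (∀ i ∉ Y, x i = v i) ∧ dist x v ≤ ε ∧ κ x ≠ c

/-- Distance-restricted AXp: a subset-minimal weak AXp. -/
def AXp {m : ℕ} {D : Fin m → Type*} {K : Type*}
    (κ : (∀ i, D i) → K) (v : ∀ i, D i) (c : K)
    (dist : (∀ i, D i) → (∀ i, D i) → ℝ) (ε : ℝ) (X : Set (Fin m)) : Prop :=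
  WAXp κ v c dist ε X ∧ ∀ X' : Set (Fin m), X' ⊂ X → ¬ WAXp κ v c dist ε X'

/-- Distance-restricted CXp: a subset-minimal weak CXp. -/
def CXp {m : ℕ} {D : Fin m → Type*} {K : Type*}
    (κ : (∀ i, D i) → K) (v : ∀ i, D i) (c : K)
    (dist : (∀ i, D i) → (∀ i, D i) → ℝ) (ε : ℝ) (Y : Set (Fin m)) : Prop :=
  WCXp κ v c dist ε Y ∧ ∀ Y' : Set (Fin m), Y' ⊂ Y → ¬ WCXp κ v c dist ε Y'

/-- `H` is a hitting set of the collection `B`. -/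
def HittingSet {α : Type*} (B : Set (Set α)) (H : Set α) : Prop :=
  ∀ P ∈ B, (H ∩ P).Nonempty

section Aux
variable {m : ℕ} {D : Fin m → Type*} {K : Type*}
    (κ : (∀ i, D i) → K) (v : ∀ i, D i) (c : K)
    (dist : (∀ i, D i) → (∀ i, D i) → ℝ) (ε : ℝ)

lemma waxp_wcxp_hit {X Y : Set (Fin m)} (hA : WAXp κ v c dist ε X)
    (hC : WCXp κ v c dist ε Y) : (X ∩ Y).Nonempty := by
  by_contra h
  rw [Set.not_nonempty_iff_eq_empty] at h
  obtain ⟨x, hx, hd, hne⟩ := hC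
  exact hne (hA x (fun i hi => hx i (fun hiY => Set.eq_empty_iff_forall_notMem.mp h i ⟨hi, hiY⟩)) hd)

lemma not_waxp_iff_wcxp_compl {X : Set (Fin m)} :
    ¬ WAXp κ v c dist ε X ↔ WCXp κ v c dist ε Xᶜ := by
  unfold WAXp WCXp
  push_neg
  constructor
  · rintro ⟨x, hx, hd, hne⟩
    exact ⟨x, fun i hi => hx i (by simpa using hi), hd, hne⟩
  · rintro ⟨x, hx, hd, hne⟩
    exact ⟨x, fun i hi => hx i (by simpa using hi), hd, hne⟩

lemma exists_cxp_subset {Y : Set (Fin m)} (h : WCXp κ v c dist ε Y) :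
    ∃ Y' ⊆ Y, CXp κ v c dist ε Y' := by
  obtain ⟨Y', hle, hmin⟩ := exists_minimal_le_of_wellFoundedLT (WCXp κ v c dist ε) Y h
  exact ⟨Y', hle, hmin.1, fun Z hZ hWZ => hZ.not_ge (hmin.le_of_le hWZ hZ.subset)⟩

end Aux

/-- Minimal hitting set duality (direction 1): `X` is a distance-restricted AXp iff
`X` is a minimal hitting set of the collection of all distance-restricted CXp's. -/
theorem axp_iff_mhs_of_cxps {m : ℕ} {D : Fin m → Type*} {K : Type*}
    (κ : (∀ i, D i) → K) (v : ∀ i, D i) (c : K) (hvc : κ v = c)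
    (dist : (∀ i, D i) → (∀ i, D i) → ℝ) (ε : ℝ) (hε : 0 < ε)
    (X : Set (Fin m)) :
    AXp κ v c dist ε X ↔
      (HittingSet {Y : Set (Fin m) | CXp κ v c dist ε Y} X ∧
        ∀ H : Set (Fin m), H ⊂ X →
          ¬ HittingSet {Y : Set (Fin m) | CXp κ v c dist ε Y} H) := by
  constructor
  · rintro ⟨hW, hmin⟩
    refine ⟨fun Y hY => waxp_wcxp_hit κ v c dist ε hW hY.1, fun H hH hHit => ?_⟩
    have hnW := hmin H hH
    rw [not_waxp_iff_wcxp_compl] at hnW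
    obtain ⟨Y', hsub, hC⟩ := exists_cxp_subset κ v c dist ε hnW
    obtain ⟨i, hiH, hiY⟩ := hHit Y' hC
    exact (hsub hiY) hiH
  · rintro ⟨hHit, hmin⟩
    have hW : WAXp κ v c dist ε X := by
      by_contra hnW
      rw [not_waxp_iff_wcxp_compl] at hnW
      obtain ⟨Y', hsub, hC⟩ := exists_cxp_subset κ v c dist ε hnW
      obtain ⟨i, hiX, hiY⟩ := hHit Y' hC
      exact (hsub hiY) hiX
    refine ⟨hW, fun X' hX' hWX' => hmin X' hX' (fun Y hY => ?_)⟩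
    exact waxp_wcxp_hit κ v c dist ε hWX' hY.1
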